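/- Consider the almost paracontact metric Walker structure on ℝ³ with ξ₂ ≡ 1, ξ₃ ≡ 0 and an arbitrary smooth function ξ₁ : ℝ³ → ℝ (so ξ = ξ₁∂x + ∂y, η = dy + ξ₁ dz, φ∂x = −∂x, φ∂y = ξ₁∂x, φ∂z = −f∂x − ξ₁∂y + ∂z). Then the structure lies strictly in the basic class G₁₂ — i.e. F is nonzero at every point and F(X,Y,Z) = η(X)(η(Y)F(ξ,ξ,Z) − η(Z)F(ξ,ξ,Y)) for all vector fields X,Y,Z — if and only if (ξ₁)_x ≡ 0, (ξ₁)_y vanishes nowhere, and 2ξ₁(ξ₁)_y − 2(ξ₁)_z − ξ₁ f_x − f_y ≡ 0 on ℝ³ (Theorem 4.4(v)). -/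

import Mathlib

open Real

/-- Points of the Walker manifold `M = ℝ³` with coordinates `(x,y,z)`. -/
abbrev Pt : Type := ℝ × ℝ × ℝ

/-- Vector fields on `ℝ³`, given by their components in the frame `∂x, ∂y, ∂z`. -/
abbrev VF : Type := Pt → Pt

/-- Partial derivative ∂/∂x. -/
noncomputable def pdx (F : Pt → ℝ) (p : Pt) : ℝ := fderiv ℝ F p ((1:ℝ), (0:ℝ), (0:ℝ))

/-- Partial derivative ∂/∂y. -/
noncomputable def pdy (F : Pt → ℝ) (p : Pt) : ℝ := fderiv ℝ F p ((0:ℝ), (1:ℝ), (0:ℝ))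

/-- Partial derivative ∂/∂z. -/
noncomputable def pdz (F : Pt → ℝ) (p : Pt) : ℝ := fderiv ℝ F p ((0:ℝ), (0:ℝ), (1:ℝ))

/-- Directional derivative of a scalar function along a vector field. -/
noncomputable def dd (X : VF) (F : Pt → ℝ) (p : Pt) : ℝ := fderiv ℝ F p (X p)

/-- Components of a tangent vector. -/
def c1 (v : Pt) : ℝ := v.1
def c2 (v : Pt) : ℝ := v.2.1
def c3 (v : Pt) : ℝ := v.2.2

/-- The coordinate vector fields `∂x, ∂y, ∂z`. -/
noncomputable def E : Fin 3 → VF :=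
  ![fun _ => ((1:ℝ), (0:ℝ), (0:ℝ)), fun _ => ((0:ℝ), (1:ℝ), (0:ℝ)),
    fun _ => ((0:ℝ), (0:ℝ), (1:ℝ))]

/-- The Walker metric with `ε = 1`: `g(∂x,∂z) = g(∂z,∂x) = 1`, `g(∂y,∂y) = 1`,
`g(∂z,∂z) = f`, all other components zero. -/
noncomputable def gm (f : Pt → ℝ) (X Y : VF) (p : Pt) : ℝ :=
  c1 (X p) * c3 (Y p) + c3 (X p) * c1 (Y p) + c2 (X p) * c2 (Y p)
    + f p * c3 (X p) * c3 (Y p)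

/-- The Levi-Civita connection of the Walker metric:
`∇_{∂x}∂z = ∇_{∂z}∂x = (1/2) f_x ∂x`, `∇_{∂y}∂z = ∇_{∂z}∂y = (1/2) f_y ∂x`,
`∇_{∂z}∂z = (1/2)(f f_x + f_z) ∂x - (1/2) f_y ∂y - (1/2) f_x ∂z`, all other covariant
derivatives of coordinate fields zero, extended by `C^∞`-linearity below and the
Leibniz rule above. -/
noncomputable def cov (f : Pt → ℝ) (X Y : VF) : VF := fun p =>
  ( dd X (fun q => c1 (Y q)) p
      + (1/2) * pdx f p * (c1 (X p) * c3 (Y p) + c3 (X p) * c1 (Y p))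
      + (1/2) * pdy f p * (c2 (X p) * c3 (Y p) + c3 (X p) * c2 (Y p))
      + (1/2) * (f p * pdx f p + pdz f p) * (c3 (X p) * c3 (Y p)),
    dd X (fun q => c2 (Y q)) p - (1/2) * pdy f p * (c3 (X p) * c3 (Y p)),
    dd X (fun q => c3 (Y q)) p - (1/2) * pdx f p * (c3 (X p) * c3 (Y p)) )

/-- Lie bracket of vector fields on `ℝ³`. -/
noncomputable def brk (X Y : VF) : VF := fun p =>
  ( dd X (fun q => c1 (Y q)) p - dd Y (fun q => c1 (X q)) p,
    dd X (fun q => c2 (Y q)) p - dd Y (fun q => c2 (X q)) p,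
    dd X (fun q => c3 (Y q)) p - dd Y (fun q => c3 (X q)) p )

/-- The `(1,1)`-tensor `φ` of the almost paracontact metric Walker structure:
`φ∂x = -ξ₂∂x + ξ₃∂y`, `φ∂y = (ξ₁ + fξ₃)∂x - ξ₃∂z`, `φ∂z = -fξ₂∂x - ξ₁∂y + ξ₂∂z`. -/
noncomputable def phiV (f ξ₁ ξ₂ ξ₃ : Pt → ℝ) (X : VF) : VF := fun p =>
  ( -ξ₂ p * c1 (X p) + (ξ₁ p + f p * ξ₃ p) * c2 (X p) - f p * ξ₂ p * c3 (X p),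
    ξ₃ p * c1 (X p) - ξ₁ p * c3 (X p),
    -ξ₃ p * c2 (X p) + ξ₂ p * c3 (X p) )

/-- The 1-form `η = ξ₃ dx + ξ₂ dy + (ξ₁ + fξ₃) dz`. -/
noncomputable def etaV (f ξ₁ ξ₂ ξ₃ : Pt → ℝ) (X : VF) (p : Pt) : ℝ :=
  ξ₃ p * c1 (X p) + ξ₂ p * c2 (X p) + (ξ₁ p + f p * ξ₃ p) * c3 (X p)

/-- The structure tensor `F(X,Y,Z) = g((∇_X φ)Y, Z)`, `(∇_X φ)Y = ∇_X(φY) - φ(∇_X Y)`. -/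
noncomputable def Ften (f ξ₁ ξ₂ ξ₃ : Pt → ℝ) (X Y Z : VF) (p : Pt) : ℝ :=
  gm f (fun q => cov f X (phiV f ξ₁ ξ₂ ξ₃ Y) q - phiV f ξ₁ ξ₂ ξ₃ (cov f X Y) q) Z p

/-- The fundamental 2-form `Φ(X,Y) = g(φX, Y)`. -/
noncomputable def Phi2 (f ξ₁ ξ₂ ξ₃ : Pt → ℝ) (X Y : VF) : Pt → ℝ :=
  gm f (phiV f ξ₁ ξ₂ ξ₃ X) Y

/-- `dη(∂i,∂j) = (1/2)(∂i(η(∂j)) - ∂j(η(∂i)))` on coordinate fields. -/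
noncomputable def deta (f ξ₁ ξ₂ ξ₃ : Pt → ℝ) (i j : Fin 3) (p : Pt) : ℝ :=
  (1/2) * (dd (E i) (etaV f ξ₁ ξ₂ ξ₃ (E j)) p - dd (E j) (etaV f ξ₁ ξ₂ ξ₃ (E i)) p)

/-- `dη(X,Y) = (1/2)(X(η(Y)) - Y(η(X)) - η([X,Y]))` on general vector fields. -/
noncomputable def detaB (f ξ₁ ξ₂ ξ₃ : Pt → ℝ) (X Y : VF) (p : Pt) : ℝ :=
  (1/2) * (dd X (etaV f ξ₁ ξ₂ ξ₃ Y) p - dd Y (etaV f ξ₁ ξ₂ ξ₃ X) p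
    - etaV f ξ₁ ξ₂ ξ₃ (brk X Y) p)

/-- The Nijenhuis tensor `N(X,Y) = φ²[X,Y] + [φX,φY] - φ[φX,Y] - φ[X,φY]`. -/
noncomputable def nij (f ξ₁ ξ₂ ξ₃ : Pt → ℝ) (X Y : VF) : VF := fun p =>
  phiV f ξ₁ ξ₂ ξ₃ (phiV f ξ₁ ξ₂ ξ₃ (brk X Y)) p
    + brk (phiV f ξ₁ ξ₂ ξ₃ X) (phiV f ξ₁ ξ₂ ξ₃ Y) p
    - phiV f ξ₁ ξ₂ ξ₃ (brk (phiV f ξ₁ ξ₂ ξ₃ X) Y) p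
    - phiV f ξ₁ ξ₂ ξ₃ (brk X (phiV f ξ₁ ξ₂ ξ₃ Y)) p

/-- The curvature tensor, with the paper's sign convention
`R(X,Y)Z = ∇_{[X,Y]}Z - ∇_X∇_Y Z + ∇_Y∇_X Z`. -/
noncomputable def Rop (f : Pt → ℝ) (X Y Z : VF) : VF := fun p =>
  cov f (brk X Y) Z p - cov f X (cov f Y Z) p + cov f Y (cov f X Z) p

/-- Second partial derivatives of `f`. -/
noncomputable def fxx (f : Pt → ℝ) : Pt → ℝ := pdx (pdx f)
noncomputable def fxy (f : Pt → ℝ) : Pt → ℝ := pdy (pdx f)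
noncomputable def fyy (f : Pt → ℝ) : Pt → ℝ := pdy (pdy f)

/-- The Ricci tensor of the Walker metric: `ρ(∂x,∂z) = ρ(∂z,∂x) = (1/2) f_xx`,
`ρ(∂y,∂z) = ρ(∂z,∂y) = (1/2) f_xy`, `ρ(∂z,∂z) = (1/2)(f f_xx - f_yy)`, all other
components zero, extended tensorially. -/
noncomputable def rhoT (f : Pt → ℝ) (X Y : VF) (p : Pt) : ℝ :=
  (1/2) * fxx f p * (c1 (X p) * c3 (Y p) + c3 (X p) * c1 (Y p))
    + (1/2) * fxy f p * (c2 (X p) * c3 (Y p) + c3 (X p) * c2 (Y p))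
    + (1/2) * (f p * fxx f p - fyy f p) * (c3 (X p) * c3 (Y p))

/-- The Ricci operator: `Q∂x = (1/2)f_xx ∂x`, `Q∂y = (1/2)f_xy ∂x`,
`Q∂z = -(1/2)f_yy ∂x + (1/2)f_xy ∂y + (1/2)f_xx ∂z`. -/
noncomputable def Qop (f : Pt → ℝ) (X : VF) : VF := fun p =>
  ( (1/2) * fxx f p * c1 (X p) + (1/2) * fxy f p * c2 (X p) - (1/2) * fyy f p * c3 (X p),
    (1/2) * fxy f p * c3 (X p),
    (1/2) * fxx f p * c3 (X p) )

/-- `dΦ(∂x,∂y,∂z) = ∂x(Φ(∂y,∂z)) - ∂y(Φ(∂x,∂z)) + ∂z(Φ(∂x,∂y))`. -/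
noncomputable def dPhi (f ξ₁ ξ₂ ξ₃ : Pt → ℝ) (p : Pt) : ℝ :=
  pdx (Phi2 f ξ₁ ξ₂ ξ₃ (E 1) (E 2)) p - pdy (Phi2 f ξ₁ ξ₂ ξ₃ (E 0) (E 2)) p
    + pdz (Phi2 f ξ₁ ξ₂ ξ₃ (E 0) (E 1)) p

/-- `(η∧Φ)(∂x,∂y,∂z) = η(∂x)Φ(∂y,∂z) - η(∂y)Φ(∂x,∂z) + η(∂z)Φ(∂x,∂y)`. -/
noncomputable def etaWedgePhi (f ξ₁ ξ₂ ξ₃ : Pt → ℝ) (p : Pt) : ℝ :=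
  etaV f ξ₁ ξ₂ ξ₃ (E 0) p * Phi2 f ξ₁ ξ₂ ξ₃ (E 1) (E 2) p
    - etaV f ξ₁ ξ₂ ξ₃ (E 1) p * Phi2 f ξ₁ ξ₂ ξ₃ (E 0) (E 2) p
    + etaV f ξ₁ ξ₂ ξ₃ (E 2) p * Phi2 f ξ₁ ξ₂ ξ₃ (E 0) (E 1) p

/-- The constant function `0`. -/
noncomputable def zeroF : Pt → ℝ := fun _ => 0
/-- The constant function `1`. -/
noncomputable def oneF : Pt → ℝ := fun _ => 1
/-- The constant function `-1`. -/
noncomputable def negOneF : Pt → ℝ := fun _ => -1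

/-- The Reeb vector field `ξ = ξ₁∂x + ∂y`. -/
noncomputable def xiVp (ξ₁ : Pt → ℝ) : VF := fun p => (ξ₁ p, (1:ℝ), (0:ℝ))

lemma lin_expand (g : Pt → ℝ) (p v : Pt) :
    fderiv ℝ g p v = v.1 * pdx g p + v.2.1 * pdy g p + v.2.2 * pdz g p := by
  have hv : v = v.1 • ((1:ℝ), (0:ℝ), (0:ℝ)) + v.2.1 • ((0:ℝ), (1:ℝ), (0:ℝ))
      + v.2.2 • ((0:ℝ), (0:ℝ), (1:ℝ)) := by
    simp [Prod.ext_iff]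
  rw [pdx, pdy, pdz]
  calc fderiv ℝ g p v
      = fderiv ℝ g p (v.1 • ((1:ℝ), (0:ℝ), (0:ℝ)) + v.2.1 • ((0:ℝ), (1:ℝ), (0:ℝ))
          + v.2.2 • ((0:ℝ), (0:ℝ), (1:ℝ))) := by rw [← hv]
    _ = _ := by
        rw [map_add, map_add, map_smul, map_smul, map_smul]
        simp [smul_eq_mul]

set_option maxHeartbeats 1000000 in
lemma master (f ξ₁ : Pt → ℝ) (hf : Differentiable ℝ f) (h1 : Differentiable ℝ ξ₁)
    (X Y Z : VF) (hY : Differentiable ℝ Y) (p : Pt) :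
    Ften f ξ₁ oneF zeroF X Y Z p =
      (c2 (Y p) * c3 (Z p) - c3 (Y p) * c2 (Z p)) *
        (fderiv ℝ ξ₁ p (X p) +
          (1/2) * (pdy f p + ξ₁ p * pdx f p) * c3 (X p)) := by
  have hY1 : DifferentiableAt ℝ (fun q => (Y q).1) p := (hY p).fst
  have hY2 : DifferentiableAt ℝ (fun q => (Y q).2.1) p := (hY p).snd.fst
  have hY3 : DifferentiableAt ℝ (fun q => (Y q).2.2) p := (hY p).snd.snd
  have t1 : fderiv ℝ (fun q => -(Y q).1 + ξ₁ q * (Y q).2.1 - f q * (Y q).2.2) p (X p)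
      = -(fderiv ℝ (fun q => (Y q).1) p (X p))
        + (ξ₁ p * fderiv ℝ (fun q => (Y q).2.1) p (X p) + (Y p).2.1 * fderiv ℝ ξ₁ p (X p))
        - (f p * fderiv ℝ (fun q => (Y q).2.2) p (X p) + (Y p).2.2 * fderiv ℝ f p (X p)) := by
    rw [fderiv_fun_sub (hY1.fun_neg.fun_add ((h1 p).fun_mul hY2)) ((hf p).fun_mul hY3),
      fderiv_fun_add hY1.fun_neg ((h1 p).fun_mul hY2), fderiv_fun_neg, fderiv_fun_mul (h1 p) hY2,
      fderiv_fun_mul (hf p) hY3]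
    simp [mul_comm]
  have t5 : fderiv ℝ (fun q => 0 - ξ₁ q * (Y q).2.2) p (X p)
      = -(ξ₁ p * fderiv ℝ (fun q => (Y q).2.2) p (X p) + (Y p).2.2 * fderiv ℝ ξ₁ p (X p)) := by
    have e : (fun q => 0 - ξ₁ q * (Y q).2.2) = fun q => -(ξ₁ q * (Y q).2.2) := by
      funext q; ring
    rw [e, fderiv_fun_neg, fderiv_fun_mul (h1 p) hY3]
    simp [mul_comm]
  simp only [Ften, gm, cov, phiV, oneF, zeroF, c1, c2, c3, dd, Prod.fst_sub, Prod.snd_sub,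
    neg_mul, one_mul, mul_one, mul_zero, zero_mul, add_zero, zero_add, neg_zero]
  rw [t1, t5, lin_expand f p (X p)]
  ring

lemma hEd : ∀ i : Fin 3, Differentiable ℝ (E i) := by
  intro i
  fin_cases i <;> simp [E]

lemma hEc : ∀ i : Fin 3, ContDiff ℝ (⊤ : ℕ∞) (E i) := by
  intro i
  fin_cases i <;> simp [E] <;> exact contDiff_const

lemma E0p (p : Pt) : E 0 p = ((1:ℝ), (0:ℝ), (0:ℝ)) := rfl
lemma E1p (p : Pt) : E 1 p = ((0:ℝ), (1:ℝ), (0:ℝ)) := rfl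
lemma E2p (p : Pt) : E 2 p = ((0:ℝ), (0:ℝ), (1:ℝ)) := rfl

lemma eta_eq (f ξ₁ : Pt → ℝ) (X : VF) (p : Pt) :
    etaV f ξ₁ oneF zeroF X p = c2 (X p) + ξ₁ p * c3 (X p) := by
  simp [etaV, oneF, zeroF]

set_option maxHeartbeats 1000000

/-- Theorem 4.4(v): the structure with `ξ₂ ≡ 1`, `ξ₃ ≡ 0` lies strictly in the class
`G₁₂` iff `(ξ₁)_x ≡ 0`, `(ξ₁)_y` vanishes nowhere and
`2ξ₁(ξ₁)_y - 2(ξ₁)_z - ξ₁ f_x - f_y ≡ 0`. -/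
theorem G12_iff (f ξ₁ : Pt → ℝ)
    (hf : ContDiff ℝ (⊤ : ℕ∞) f) (h1 : ContDiff ℝ (⊤ : ℕ∞) ξ₁) :
    ((∀ p : Pt, ∃ i j k : Fin 3, Ften f ξ₁ oneF zeroF (E i) (E j) (E k) p ≠ 0) ∧
      (∀ X Y Z : VF, ContDiff ℝ (⊤ : ℕ∞) X → ContDiff ℝ (⊤ : ℕ∞) Y →
        ContDiff ℝ (⊤ : ℕ∞) Z → ∀ p : Pt,
          Ften f ξ₁ oneF zeroF X Y Z p =
            etaV f ξ₁ oneF zeroF X p *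
              (etaV f ξ₁ oneF zeroF Y p *
                  Ften f ξ₁ oneF zeroF (xiVp ξ₁) (xiVp ξ₁) Z p -
                etaV f ξ₁ oneF zeroF Z p *
                  Ften f ξ₁ oneF zeroF (xiVp ξ₁) (xiVp ξ₁) Y p))) ↔
    ((∀ p : Pt, pdx ξ₁ p = 0) ∧ (∀ p : Pt, pdy ξ₁ p ≠ 0) ∧
      (∀ p : Pt, 2 * ξ₁ p * pdy ξ₁ p - 2 * pdz ξ₁ p - ξ₁ p * pdx f p - pdy f p = 0)) := by
  have hfd : Differentiable ℝ f := hf.differentiable (by simp)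
  have h1d : Differentiable ℝ ξ₁ := h1.differentiable (by simp)
  have hxid : Differentiable ℝ (xiVp ξ₁) := by
    unfold xiVp
    exact h1d.prodMk ((differentiable_const _).prodMk (differentiable_const _))
  have hxip : ∀ p : Pt, xiVp ξ₁ p = (ξ₁ p, (1:ℝ), (0:ℝ)) := fun p => rfl
  have M := master f ξ₁ hfd h1d
  constructor
  · rintro ⟨hnz, hid⟩
    have hxic : ContDiff ℝ (⊤ : ℕ∞) (xiVp ξ₁) := by
      unfold xiVp
      exact h1.prodMk (contDiff_const.prodMk contDiff_const)
    have hx : ∀ p : Pt, pdx ξ₁ p = 0 := by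
      intro p
      have h01 := hid (E 0) (E 1) (E 2) (hEc 0) (hEc 1) (hEc 2) p
      rw [M (E 0) (E 1) (E 2) (hEd 1) p, M (xiVp ξ₁) (xiVp ξ₁) (E 2) hxid p,
        M (xiVp ξ₁) (xiVp ξ₁) (E 1) hxid p] at h01
      simp only [eta_eq] at h01
      simp only [E0p, E1p, E2p, hxip, c1, c2, c3, lin_expand] at h01
      linarith [h01]
    have hc : ∀ p : Pt,
        2 * ξ₁ p * pdy ξ₁ p - 2 * pdz ξ₁ p - ξ₁ p * pdx f p - pdy f p = 0 := by
      intro p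
      have h21 := hid (E 2) (E 1) (E 2) (hEc 2) (hEc 1) (hEc 2) p
      rw [M (E 2) (E 1) (E 2) (hEd 1) p, M (xiVp ξ₁) (xiVp ξ₁) (E 2) hxid p,
        M (xiVp ξ₁) (xiVp ξ₁) (E 1) hxid p] at h21
      simp only [eta_eq] at h21
      simp only [E0p, E1p, E2p, hxip, c1, c2, c3, lin_expand] at h21
      have hxp := hx p
      linear_combination (-2 : ℝ) * h21 - 2 * ξ₁ p ^ 2 * hxp
    refine ⟨hx, ?_, hc⟩
    intro p hcon
    obtain ⟨i, j, k, hF⟩ := hnz p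
    apply hF
    rw [M (E i) (E j) (E k) (hEd j) p]
    have hz : fderiv ℝ ξ₁ p (E i p) +
        1/2 * (pdy f p + ξ₁ p * pdx f p) * c3 (E i p) = 0 := by
      have hxp := hx p
      have hcp := hc p
      fin_cases i
      · simp [E, c3, lin_expand]
        linarith [hxp]
      · simp [E, c3, lin_expand]
        linarith [hcon]
      · simp [E, c3, lin_expand]
        linear_combination (-1/2 : ℝ) * hcp + ξ₁ p * hcon
    rw [hz, mul_zero]
  · rintro ⟨hx, hy, hc⟩
    constructor
    · intro p
      refine ⟨1, 1, 2, ?_⟩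
      rw [M (E 1) (E 1) (E 2) (hEd 1) p]
      simp only [E1p, E2p, c2, c3, lin_expand]
      simpa using hy p
    · intro X Y Z hX hY hZ p
      rw [M X Y Z (hY.differentiable (by simp)) p, M (xiVp ξ₁) (xiVp ξ₁) Z hxid p,
        M (xiVp ξ₁) (xiVp ξ₁) Y hxid p]
      simp only [eta_eq]
      simp only [hxip, c1, c2, c3, lin_expand]
      linear_combination ((Y p).2.1 * (Z p).2.2 - (Y p).2.2 * (Z p).2.1) *
        (((X p).1 - ξ₁ p * (X p).2.1 - ξ₁ p ^ 2 * (X p).2.2) * hx p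
          - (1/2) * (X p).2.2 * hc p)
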